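/- Let a₁, b₂, c₂, d₃, e₄ ∈ ℂ[y,z] be homogeneous polynomials of degrees 1, 2, 2, 3, 4 respectively. Then there exist complex numbers λ, α, β, γ, δ satisfying the five relations α+γ = 2a₁(λ,1), β+δ = b₂(λ,1) + λ³, αγ = c₂(λ,1) − λ³, αδ+βγ = d₃(λ,1), βδ = e₄(λ,1). -/
import Mathlib

open MvPolynomial

private lemma aux_eval_aeval (q : MvPolynomial (Fin 2) ℂ) (l : ℂ) :
    Polynomial.eval l (MvPolynomial.aeval ![(Polynomial.X : Polynomial ℂ), 1] q)
      = eval ![l, 1] q := by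
  rw [MvPolynomial.aeval_def]
  rw [show Polynomial.eval l (MvPolynomial.eval₂ (algebraMap ℂ (Polynomial ℂ)) ![Polynomial.X, 1] q)
      = (Polynomial.evalRingHom l)
        (MvPolynomial.eval₂ (algebraMap ℂ (Polynomial ℂ)) ![Polynomial.X, 1] q) from rfl,
    MvPolynomial.eval₂_comp_left (Polynomial.evalRingHom l)]
  simp only [MvPolynomial.eval, Polynomial.coe_evalRingHom]
  congr 1
  · ext x; simp
  · funext i; fin_cases i <;> simp

private lemma aux_natDegree_le (q : MvPolynomial (Fin 2) ℂ) {n : ℕ} (h : q.IsHomogeneous n) :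
    (MvPolynomial.aeval ![(Polynomial.X : Polynomial ℂ), 1] q).natDegree ≤ n := by
  rw [MvPolynomial.aeval_def, MvPolynomial.eval₂_eq]
  apply Polynomial.natDegree_sum_le_of_forall_le
  intro m hm
  have hcm : MvPolynomial.coeff m q ≠ 0 := MvPolynomial.mem_support_iff.mp hm
  have hdeg := h hcm
  have hw : ∑ i ∈ m.support, m i = n := by
    simpa [Finsupp.weight_apply, Finsupp.sum, smul_eq_mul] using hdeg
  refine le_trans Polynomial.natDegree_mul_le ?_
  have h1 : ((algebraMap ℂ (Polynomial ℂ)) (MvPolynomial.coeff m q)).natDegree = 0 := by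
    simp [Polynomial.natDegree_C]
  rw [h1, zero_add]
  refine le_trans (Polynomial.natDegree_prod_le _ _) ?_
  rw [← hw]
  apply Finset.sum_le_sum
  intro i _
  fin_cases i <;> simp [Polynomial.natDegree_X_pow]

/-- Existence of `λ, α, β, γ, δ ∈ ℂ` satisfying the five relations needed for the
quartic of family (A.4) to contain the plane conic `V(y - λz, tz + x² + αxz + βz²)`.
Variables: in `ℂ[y,z]` we use `y = X 0`, `z = X 1`. -/
theorem stmt_4 (a b c d e : MvPolynomial (Fin 2) ℂ)
    (ha : a.IsHomogeneous 1) (hb : b.IsHomogeneous 2) (hc : c.IsHomogeneous 2)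
    (hd : d.IsHomogeneous 3) (he : e.IsHomogeneous 4) :
    ∃ l α β γ δ : ℂ,
      α + γ = 2 * eval ![l, 1] a ∧
      β + δ = eval ![l, 1] b + l ^ 3 ∧
      α * γ = eval ![l, 1] c - l ^ 3 ∧
      α * δ + β * γ = eval ![l, 1] d ∧
      β * δ = eval ![l, 1] e := by
  set pA := MvPolynomial.aeval ![(Polynomial.X : Polynomial ℂ), 1] a with hpA
  set pB := MvPolynomial.aeval ![(Polynomial.X : Polynomial ℂ), 1] b with hpB
  set pC := MvPolynomial.aeval ![(Polynomial.X : Polynomial ℂ), 1] c with hpC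
  set pD := MvPolynomial.aeval ![(Polynomial.X : Polynomial ℂ), 1] d with hpD
  set pE := MvPolynomial.aeval ![(Polynomial.X : Polynomial ℂ), 1] e with hpE
  have nA : pA.natDegree ≤ 1 := aux_natDegree_le a ha
  have nB : pB.natDegree ≤ 2 := aux_natDegree_le b hb
  have nC : pC.natDegree ≤ 2 := aux_natDegree_le c hc
  have nD : pD.natDegree ≤ 3 := aux_natDegree_le d hd
  have nE : pE.natDegree ≤ 4 := aux_natDegree_le e he
  set P : Polynomial ℂ := Polynomial.X ^ 3 + (pA ^ 2 - pC) with hP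
  set M : Polynomial ℂ := Polynomial.X ^ 3 + pB with hM
  set K : Polynomial ℂ := pD - pA * M with hK
  set G : Polynomial ℂ := P * (M ^ 2 - 4 * pE) + (-(K ^ 2)) with hG
  have dlt : ∀ (p : Polynomial ℂ) (k : ℕ), p.natDegree < k → p.degree < (k : ℕ) := by
    intro p k hk
    exact lt_of_le_of_lt Polynomial.degree_le_natDegree (by exact_mod_cast hk)
  have nAC : (pA ^ 2 - pC).natDegree < 3 := by
    have h1 : (pA ^ 2).natDegree ≤ 2 * pA.natDegree := Polynomial.natDegree_pow_le
    have h2 := Polynomial.natDegree_sub_le (pA ^ 2) pC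
    omega
  have monP : P.Monic := Polynomial.monic_X_pow_add (dlt _ 3 nAC)
  have monM : M.Monic := Polynomial.monic_X_pow_add (dlt _ 3 (by omega))
  have degM : M.natDegree = 3 := by
    rw [hM, Polynomial.natDegree_add_eq_left_of_degree_lt]
    · exact Polynomial.natDegree_X_pow 3
    · rw [Polynomial.degree_X_pow]; exact dlt _ 3 (by omega)
  have degP : P.natDegree = 3 := by
    rw [hP, Polynomial.natDegree_add_eq_left_of_degree_lt]
    · exact Polynomial.natDegree_X_pow 3
    · rw [Polynomial.degree_X_pow]; exact dlt _ 3 nAC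
  have monM2 : (M ^ 2).Monic := monM.pow 2
  have degM2 : (M ^ 2).natDegree = 6 := by
    rw [monM.natDegree_pow]; omega
  have nE4 : (-(4 * pE)).natDegree < 6 := by
    have h1 : ((4 : Polynomial ℂ) * pE).natDegree ≤ (4 : Polynomial ℂ).natDegree + pE.natDegree :=
      Polynomial.natDegree_mul_le
    have h4 : (4 : Polynomial ℂ).natDegree = 0 := Polynomial.natDegree_ofNat 4
    rw [Polynomial.natDegree_neg]
    omega
  have degM2' : (M ^ 2).degree = ((6 : ℕ) : WithBot ℕ) := by
    rw [Polynomial.degree_eq_natDegree monM2.ne_zero, degM2]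
  have monR : (M ^ 2 - 4 * pE).Monic := by
    rw [sub_eq_add_neg]
    exact monM2.add_of_left (by rw [degM2']; exact dlt _ 6 nE4)
  have degR : (M ^ 2 - 4 * pE).natDegree = 6 := by
    rw [sub_eq_add_neg, Polynomial.natDegree_add_eq_left_of_degree_lt, degM2]
    rw [degM2']; exact dlt _ 6 nE4
  have monPR : (P * (M ^ 2 - 4 * pE)).Monic := monP.mul monR
  have degPR : (P * (M ^ 2 - 4 * pE)).natDegree = 9 := by
    rw [monP.natDegree_mul monR, degP, degR]
  have degPR2 : (P * (M ^ 2 - 4 * pE)).degree = ((9 : ℕ) : WithBot ℕ) := by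
    rw [Polynomial.degree_eq_natDegree monPR.ne_zero, degPR]
  have nK : K.natDegree ≤ 4 := by
    rw [hK]
    have h1 : (pA * M).natDegree ≤ pA.natDegree + M.natDegree := Polynomial.natDegree_mul_le
    have h2 := Polynomial.natDegree_sub_le pD (pA * M)
    omega
  have nK2 : (-(K ^ 2)).natDegree < 9 := by
    rw [Polynomial.natDegree_neg]
    have := Polynomial.natDegree_pow_le (p := K) (n := 2)
    omega
  have monG : G.Monic := monPR.add_of_left (by rw [degPR2]; exact dlt _ 9 nK2)
  have degG : G.natDegree = 9 := by
    rw [hG, Polynomial.natDegree_add_eq_left_of_degree_lt, degPR]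
    rw [degPR2]; exact dlt _ 9 nK2
  have degG' : G.degree ≠ 0 := by
    rw [Polynomial.degree_eq_natDegree monG.ne_zero, degG]
    exact_mod_cast (by norm_num : (9 : ℕ) ≠ 0)
  obtain ⟨l, hl⟩ := IsAlgClosed.exists_root G degG'
  set A := eval ![l, 1] a with hA
  set B := eval ![l, 1] b with hB
  set C := eval ![l, 1] c with hC
  set D := eval ![l, 1] d with hD
  set E := eval ![l, 1] e with hE
  have key : (l ^ 3 + (A ^ 2 - C)) * ((l ^ 3 + B) ^ 2 - 4 * E)
      - (D - A * (l ^ 3 + B)) ^ 2 = 0 := by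
    have h0 := hl
    rw [Polynomial.IsRoot, hG, hK, hP, hM, hpA, hpB, hpC, hpD, hpE] at h0
    simp only [Polynomial.eval_add, Polynomial.eval_mul, Polynomial.eval_sub,
      Polynomial.eval_pow, Polynomial.eval_neg, Polynomial.eval_X, Polynomial.eval_ofNat,
      aux_eval_aeval] at h0
    rw [hA, hB, hC, hD, hE]
    linear_combination h0
  obtain ⟨u0, hu0⟩ := IsAlgClosed.exists_pow_nat_eq (A ^ 2 - C + l ^ 3) (n := 2) (by norm_num)
  obtain ⟨s, hs⟩ := IsAlgClosed.exists_pow_nat_eq ((B + l ^ 3) ^ 2 - 4 * E) (n := 2) (by norm_num)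
  have hsq : (u0 * s - (D - A * (B + l ^ 3))) * (u0 * s + (D - A * (B + l ^ 3))) = 0 := by
    have h2 : (u0 * s) ^ 2 = (D - A * (B + l ^ 3)) ^ 2 := by
      rw [mul_pow, hu0, hs]
      linear_combination key
    linear_combination h2
  obtain ⟨u, hu, hus⟩ : ∃ u : ℂ, u ^ 2 = A ^ 2 - C + l ^ 3 ∧ u * s = D - A * (B + l ^ 3) := by
    rcases mul_eq_zero.mp hsq with h | h
    · exact ⟨u0, hu0, by linear_combination h⟩
    · exact ⟨-u0, by rw [neg_pow]; simpa using hu0, by linear_combination -h⟩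
  exact ⟨l, A - u, (B + l ^ 3 + s) / 2, A + u, (B + l ^ 3 - s) / 2, by ring, by ring,
    by linear_combination -hu, by linear_combination hus, by linear_combination (-1 / 4 : ℂ) * hs⟩
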